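/- Suppose L_{α,n} satisfies the uniform RSC condition with parameters (γ, τ, α₀, r), the penalty ρ_λ is μ-amenable with μ < γ, and the sample size satisfies n > 2τ s log p / (γ − μ). Then the restricted objective β ↦ L_{α,n}(β) + ρ_λ(β) is strictly convex over the region {β ∈ ℝ^p : supp(β) ⊆ S, ‖β − β*‖₂ ≤ r}. -/

import Mathlib

open MeasureTheory Filter Real
open scoped RealInnerProductSpace

noncomputable section

/-- The ℓ¹ norm of a vector. -/
def l1Norm {p : ℕ} (β : EuclideanSpace ℝ (Fin p)) : ℝ := ∑ j, |β j|

/-- A `μa`-amenable penalty with regularization level `lam` (Assumption 1(i)-(vi)). -/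
structure AmenablePenalty (ρ : ℝ → ℝ) (lam μa : ℝ) : Prop where
  symm : ∀ t : ℝ, ρ (-t) = ρ t
  zero : ρ 0 = 0
  mono : MonotoneOn ρ (Set.Ici 0)
  ratio_anti : AntitoneOn (fun t => ρ t / t) (Set.Ioi 0)
  differentiable : ∀ t : ℝ, t ≠ 0 → DifferentiableAt ℝ ρ t
  deriv_lim : Filter.Tendsto (deriv ρ) (nhdsWithin 0 (Set.Ioi 0)) (nhds lam)
  conv : ConvexOn ℝ Set.univ fun t => ρ t + μa / 2 * t ^ 2

/-- The uniform restricted strong convexity condition (Assumption 4). -/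
def UniformRSC {p : ℕ} (L : ℝ → EuclideanSpace ℝ (Fin p) → ℝ)
    (βstar : EuclideanSpace ℝ (Fin p)) (γ τ α₀ r : ℝ) (n : ℕ) : Prop :=
  ∀ α : ℝ, α₀ ≤ α → ∀ β₁ β₂ : EuclideanSpace ℝ (Fin p),
    ‖β₁ - βstar‖ ≤ r → ‖β₂ - βstar‖ ≤ r →
    γ * ‖β₁ - β₂‖ ^ 2 - τ * (Real.log p / n) * (l1Norm (β₁ - β₂)) ^ 2 ≤
      ⟪gradient (L α) β₁ - gradient (L α) β₂, β₁ - β₂⟫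

lemma aux_strictConvexOn {E : Type*} [NormedAddCommGroup E] [InnerProductSpace ℝ E]
    [CompleteSpace E]
    {s : Set E} (hs : Convex ℝ s) {f : E → ℝ} (hf : Differentiable ℝ f) (μ : ℝ)
    (hmono : ∀ x ∈ s, ∀ y ∈ s, x ≠ y →
      μ * ‖x - y‖ ^ 2 < ⟪gradient f x - gradient f y, x - y⟫) :
    StrictConvexOn ℝ s (fun β => f β - μ / 2 * ‖β‖ ^ 2) := by
  refine ⟨hs, fun x hx y hy hxy a b ha hb hab => ?_⟩
  set v := y - x with hv_def
  have hv : v ≠ 0 := sub_ne_zero.2 (Ne.symm hxy)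
  set c : ℝ → E := fun t => x + t • v with hc
  set g : ℝ → ℝ := fun t => f (c t) - μ / 2 * ‖c t‖ ^ 2 with hg
  set D : ℝ → ℝ := fun t => ⟪gradient f (c t), v⟫ - μ * (⟪x, v⟫ + t * ⟪v, v⟫) with hD
  have hct : ∀ t ∈ Set.Icc (0:ℝ) 1, c t ∈ s := by
    intro t ht
    have hrepr : c t = (1 - t) • x + t • y := by
      simp only [hc, hv_def, smul_sub]
      module
    rw [hrepr]
    exact hs hx hy (by linarith [ht.2]) ht.1 (by ring)
  have hderiv : ∀ t : ℝ, HasDerivAt g (D t) t := by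
    intro t
    have h1 : HasDerivAt c v t := by
      have h := ((hasDerivAt_id t).smul_const v).const_add x
      rw [one_smul] at h
      exact h
    have h2 : HasDerivAt (fun t => f (c t)) ⟪gradient f (c t), v⟫ t := by
      have := ((hf (c t)).hasGradientAt.hasFDerivAt).comp_hasDerivAt t h1
      exact this.congr_deriv (by simp [InnerProductSpace.toDual_apply_apply])
    have h3 : HasDerivAt (fun t => μ / 2 * ‖c t‖ ^ 2) (μ * (⟪x, v⟫ + t * ⟪v, v⟫)) t := by
      have heq : (fun t => μ / 2 * ‖c t‖ ^ 2)
          = fun u : ℝ => μ / 2 * (⟪x, x⟫ + 2 * (u * ⟪x, v⟫) + u * u * ⟪v, v⟫) := by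
        funext u
        rw [← real_inner_self_eq_norm_sq]
        simp only [hc]
        rw [real_inner_add_add_self, real_inner_smul_right, real_inner_smul_left,
          real_inner_smul_right]
        ring
      rw [heq]
      have hpoly : HasDerivAt
          (fun u : ℝ => μ / 2 * (⟪x, x⟫ + 2 * (u * ⟪x, v⟫) + u * u * ⟪v, v⟫))
          (μ / 2 * ((0 + 2 * (1 * ⟪x, v⟫)) + (1 * t + t * 1) * ⟪v, v⟫)) t := by
        exact (((hasDerivAt_const t (⟪x, x⟫ : ℝ)).add
          (((hasDerivAt_id t).mul_const (⟪x, v⟫ : ℝ)).const_mul 2)).add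
          (((hasDerivAt_id t).mul (hasDerivAt_id t)).mul_const (⟪v, v⟫ : ℝ))).const_mul (μ / 2)
      convert hpoly using 1
      ring
    exact h2.sub h3
  have hmonoD : StrictMonoOn D (Set.Icc (0:ℝ) 1) := by
    intro t ht u hu htu
    have hcts : c t ∈ s := hct t ht
    have hcus : c u ∈ s := hct u hu
    have hcd : c u - c t = (u - t) • v := by
      simp only [hc, sub_smul]
      abel
    have hne : c u ≠ c t := by
      intro h
      have : (u - t) • v = 0 := by rw [← hcd, h, sub_self]
      rcases smul_eq_zero.1 this with h' | h'
      · exact (ne_of_gt htu).symm (by linarith [sub_eq_zero.1 h'])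
      · exact hv h'
    have hkey := hmono (c u) hcus (c t) hcts hne
    rw [hcd] at hkey
    rw [real_inner_smul_right, norm_smul] at hkey
    have hvv : ‖v‖ ^ 2 = ⟪v, v⟫ := (real_inner_self_eq_norm_sq v).symm
    have hut : (0:ℝ) < u - t := sub_pos.2 htu
    have habs : ‖(u - t)‖ = u - t := abs_of_pos hut
    rw [habs] at hkey
    have hkey2 : μ * ((u - t) * ⟪v, v⟫) < ⟪gradient f (c u) - gradient f (c t), v⟫ := by
      have h2 : μ * ((u - t) ^ 2 * ⟪v, v⟫)
          < (u - t) * ⟪gradient f (c u) - gradient f (c t), v⟫ := by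
        calc μ * ((u - t) ^ 2 * ⟪v, v⟫) = μ * ((u - t) * ‖v‖) ^ 2 := by rw [← hvv]; ring
        _ < _ := hkey
      nlinarith [h2]
    simp only [hD, inner_sub_left] at hkey2 ⊢
    nlinarith [hkey2]
  have hcont : ContinuousOn g (Set.Icc (0:ℝ) 1) := fun t _ =>
    ((hderiv t).differentiableAt.continuousAt).continuousWithinAt
  have hconv : StrictConvexOn ℝ (Set.Icc (0:ℝ) 1) g := by
    apply StrictMonoOn.strictConvexOn_of_deriv (convex_Icc 0 1) hcont
    rw [interior_Icc]
    intro t ht u hu htu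
    rw [(hderiv t).deriv, (hderiv u).deriv]
    exact hmonoD (Set.Ioo_subset_Icc_self ht) (Set.Ioo_subset_Icc_self hu) htu
  have h01 := hconv.2 (Set.left_mem_Icc.2 zero_le_one) (Set.right_mem_Icc.2 zero_le_one)
    (by norm_num : (0:ℝ) ≠ 1) ha hb hab
  have hc0 : c 0 = x := by simp [hc]
  have hc1 : c 1 = y := by simp [hc, hv_def]
  have hcb : c b = a • x + b • y := by
    simp only [hc, hv_def, smul_sub]
    have : a = 1 - b := by linarith
    rw [this]
    module
  simp only [smul_eq_mul, mul_zero, mul_one, zero_add] at h01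
  simp only [hg] at h01
  rw [hc0, hc1, hcb] at h01
  simpa [smul_eq_mul] using h01

/-- Lemma 3: under uniform RSC, a `μ`-amenable penalty with `μ < γ`, and
`n > 2τ s log p/(γ − μ)`, the restricted objective `β ↦ L_{α,n}(β) + ρ_λ(β)` is strictly
convex over `{β : supp(β) ⊆ S, ‖β − β*‖₂ ≤ r}`. -/
theorem statement_8 {p : ℕ} (n s : ℕ) (hn : 1 ≤ n) (hp : 2 ≤ p)
    (γ τ α₀ r μa lam : ℝ) (hγ : 0 < γ) (hτ : 0 < τ) (hr : 0 < r) (hμa : 0 ≤ μa)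
    (βstar : EuclideanSpace ℝ (Fin p))
    (hsparse : (Finset.univ.filter fun j => βstar j ≠ 0).card = s)
    (L : ℝ → EuclideanSpace ℝ (Fin p) → ℝ) (hdiff : ∀ α, Differentiable ℝ (L α))
    (hRSC : UniformRSC L βstar γ τ α₀ r n)
    (ρ : ℝ → ℝ) (hpen : AmenablePenalty ρ lam μa) (hμγ : μa < γ)
    (hsample : 2 * τ * s * Real.log p / (γ - μa) < n)
    (α : ℝ) (hα : α₀ ≤ α) :
    StrictConvexOn ℝ
      {β : EuclideanSpace ℝ (Fin p) | (∀ j, β j ≠ 0 → βstar j ≠ 0) ∧ ‖β - βstar‖ ≤ r}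
      (fun β => L α β + ∑ j, ρ (β j)) := by
  classical
  set C : Set (EuclideanSpace ℝ (Fin p)) :=
    {β | (∀ j, β j ≠ 0 → βstar j ≠ 0) ∧ ‖β - βstar‖ ≤ r} with hC
  have hγμ : 0 < γ - μa := sub_pos.2 hμγ
  have hnpos : (0:ℝ) < n := by exact_mod_cast hn
  have hlogp : 0 ≤ Real.log p := Real.log_nonneg (by exact_mod_cast le_trans one_le_two hp)
  -- convexity of C
  have hCconv : Convex ℝ C := by
    intro β₁ hβ₁ β₂ hβ₂ a b ha hb hab
    constructor
    · intro j hj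
      by_contra h0
      have h1 : β₁ j = 0 := by
        by_contra h; exact absurd (hβ₁.1 j h) (by simp [h0])
      have h2 : β₂ j = 0 := by
        by_contra h; exact absurd (hβ₂.1 j h) (by simp [h0])
      exact hj (by simp [h1, h2])
    · have key : a • β₁ + b • β₂ - βstar = a • (β₁ - βstar) + b • (β₂ - βstar) := by
        have h1 : a = 1 - b := by linarith
        rw [smul_sub, smul_sub, h1]
        module
      rw [key]
      calc ‖a • (β₁ - βstar) + b • (β₂ - βstar)‖
          ≤ ‖a • (β₁ - βstar)‖ + ‖b • (β₂ - βstar)‖ := norm_add_le _ _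
        _ = a * ‖β₁ - βstar‖ + b * ‖β₂ - βstar‖ := by
            rw [norm_smul, norm_smul, Real.norm_eq_abs, Real.norm_eq_abs,
              abs_of_nonneg ha, abs_of_nonneg hb]
        _ ≤ a * r + b * r := by
            gcongr
            exacts [hβ₁.2, hβ₂.2]
        _ = r := by rw [← add_mul, hab, one_mul]
  -- strict convexity of the smooth part
  have hh : StrictConvexOn ℝ C (fun β => L α β - μa / 2 * ‖β‖ ^ 2) := by
    apply aux_strictConvexOn hCconv (hdiff α)
    intro x hx y hy hxy
    have hRSCxy := hRSC α hα x y hx.2 hy.2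
    set d := x - y with hd_def
    have hd0 : d ≠ 0 := sub_ne_zero.2 hxy
    have hdsupp : ∀ j, βstar j = 0 → d j = 0 := by
      intro j hj
      have h1 : x j = 0 := by by_contra h; exact (hx.1 j h) hj
      have h2 : y j = 0 := by by_contra h; exact (hy.1 j h) hj
      simp [hd_def, h1, h2]
    set T := Finset.univ.filter (fun j => βstar j ≠ 0) with hT
    have hl1 : l1Norm d = ∑ j ∈ T, |d j| := by
      rw [l1Norm, hT]
      exact (Finset.sum_filter_of_ne (by
        intro j _ hne
        intro h0
        exact hne (by simp [hdsupp j h0]))).symm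
    have hcs : (∑ j ∈ T, |d j|) ^ 2 ≤ (T.card : ℝ) * ∑ j ∈ T, |d j| ^ 2 := by
      exact sq_sum_le_card_mul_sum_sq
    have hsum_le : ∑ j ∈ T, |d j| ^ 2 ≤ ∑ j, |d j| ^ 2 :=
      Finset.sum_le_sum_of_subset_of_nonneg (Finset.filter_subset _ _)
        (fun j _ _ => sq_nonneg _)
    have hnormd : ‖d‖ ^ 2 = ∑ j, |d j| ^ 2 := by
      rw [EuclideanSpace.norm_eq, Real.sq_sqrt (by positivity)]
      simp [Real.norm_eq_abs]
    have hNpos : (0:ℝ) < ‖d‖ ^ 2 := pow_pos (norm_pos_iff.2 hd0) 2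
    have hB : l1Norm d ^ 2 ≤ (s : ℝ) * ‖d‖ ^ 2 := by
      rw [hl1, hnormd]
      calc (∑ j ∈ T, |d j|) ^ 2 ≤ (T.card : ℝ) * ∑ j ∈ T, |d j| ^ 2 := hcs
        _ = (s : ℝ) * ∑ j ∈ T, |d j| ^ 2 := by rw [hT, hsparse]
        _ ≤ (s : ℝ) * ∑ j, |d j| ^ 2 := by
            apply mul_le_mul_of_nonneg_left hsum_le (by positivity)
    have hK : 0 ≤ τ * (Real.log p / n) := by positivity
    have hKs : τ * (Real.log p / n) * s < (γ - μa) / 2 := by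
      rw [div_lt_iff₀ hγμ] at hsample
      have heq : τ * (Real.log p / n) * s = τ * s * Real.log p / n := by ring
      rw [heq, div_lt_div_iff₀ hnpos (by norm_num : (0:ℝ) < 2)]
      nlinarith [hsample]
    have hKB : τ * (Real.log p / n) * l1Norm d ^ 2
        ≤ τ * (Real.log p / n) * ((s : ℝ) * ‖d‖ ^ 2) :=
      mul_le_mul_of_nonneg_left hB hK
    nlinarith [hRSCxy, hKB, hKs, hNpos, mul_lt_mul_of_pos_right hKs hNpos]
  -- convexity of the augmented penalty
  have hterm : ∀ j : Fin p, ConvexOn ℝ (Set.univ : Set (EuclideanSpace ℝ (Fin p)))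
      (fun β => ρ (β j) + μa / 2 * (β j) ^ 2) := by
    intro j
    have := hpen.conv.comp_linearMap (EuclideanSpace.projₗ j)
    exact this
  have hqsum : ∀ t : Finset (Fin p), ConvexOn ℝ (Set.univ : Set (EuclideanSpace ℝ (Fin p)))
      (fun β => ∑ j ∈ t, (ρ (β j) + μa / 2 * (β j) ^ 2)) := by
    intro t
    induction t using Finset.induction_on with
    | empty => simpa using convexOn_const (0:ℝ) convex_univ
    | insert _ _ hj ih =>
        simp only [Finset.sum_insert hj]
        exact (hterm _).add ih
  have hq : ConvexOn ℝ C (fun β => ∑ j, (ρ (β j) + μa / 2 * (β j) ^ 2)) :=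
    (hqsum Finset.univ).subset (Set.subset_univ C) hCconv
  have hEq : (fun β : EuclideanSpace ℝ (Fin p) => L α β + ∑ j, ρ (β j))
      = fun β => (L α β - μa / 2 * ‖β‖ ^ 2) + ∑ j, (ρ (β j) + μa / 2 * (β j) ^ 2) := by
    funext β
    have hn2 : ‖β‖ ^ 2 = ∑ j, (β j) ^ 2 := by
      rw [EuclideanSpace.norm_eq, Real.sq_sqrt (by positivity)]
      simp [Real.norm_eq_abs, sq_abs]
    rw [Finset.sum_add_distrib, ← Finset.mul_sum, ← hn2]
    ring
  rw [hEq]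
  exact hh.add_convexOn hq

end
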